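/- For every integer α and every integer l ≥ 1, the identity Σ_{j=0}^{l} f_j(α)·g_{l−j}(α+j) = 0 holds in ℚ(q). (This expresses that the two triangular transition matrices of the paper's Proposition 4.15 — between the monomial basis B₂^(b−k)B₁^(c−k)η and the icanonical basis 𝔅₂^(0,b−k,c−k) on L(m,n) — are mutually inverse; the proof does not depend on the value of α.) -/

import Mathlib

open scoped BigOperators

/-- The generator `q` of the field of rational functions `ℚ(q)`. -/
noncomputable def q : RatFunc ℚ := RatFunc.X

/-- The balanced quantum integer `[a] = (q^a - q^(-a))/(q - q⁻¹)`. -/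
noncomputable def qint (a : ℤ) : RatFunc ℚ := (q ^ a - q ^ (-a)) / (q - q⁻¹)

/-- The quantum factorial `[k]! = [1][2]⋯[k]`. -/
noncomputable def qfact (k : ℕ) : RatFunc ℚ := ∏ i ∈ Finset.range k, qint ((i : ℤ) + 1)

/-- The balanced quantum binomial `qbinom a b = [a][a-1]⋯[a-b+1]/[b]!` for `b ≥ 0`,
and `0` for `b < 0`. -/
noncomputable def qbinom (a b : ℤ) : RatFunc ℚ :=
  if b < 0 then 0
  else (∏ i ∈ Finset.range b.toNat, qint (a - (i : ℤ))) / qfact b.toNat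

/-- The coefficient `f_k(α)` of Proposition 4.15: `f_0(α) = 1`; for `k ≥ 1`,
`f_k(α) = [α]·([α−k+2][α−k+4]⋯[α+k−2])/[k]!` if `k ≡ α (mod 2)` and
`f_k(α) = ([α−k+1][α−k+3]⋯[α+k−1])/[k]!` otherwise. -/
noncomputable def fcoef (α : ℤ) (k : ℕ) : RatFunc ℚ :=
  if k = 0 then 1
  else if (α - (k : ℤ)) % 2 = 0 then
    qint α * (∏ i ∈ Finset.range (k - 1), qint (α - (k : ℤ) + 2 * ((i : ℤ) + 1))) / qfact k
  else (∏ i ∈ Finset.range k, qint (α - (k : ℤ) + 1 + 2 * (i : ℤ))) / qfact k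

/-- The coefficient `g_k(α)` of Proposition 4.15: `g_0(α) = 1`; for `k ≥ 1`,
`g_k(α) = (−1)^k·([α][α+2]⋯[α+2k−2])/[k]!` if `α` is even and
`g_k(α) = (−1)^k·[α+k−1]·([α+1][α+3]⋯[α+2k−3])/[k]!` if `α` is odd. -/
noncomputable def gcoef (α : ℤ) (k : ℕ) : RatFunc ℚ :=
  if k = 0 then 1
  else if α % 2 = 0 then
    (-1 : RatFunc ℚ) ^ k * (∏ i ∈ Finset.range k, qint (α + 2 * (i : ℤ))) / qfact k
  else
    (-1 : RatFunc ℚ) ^ k * qint (α + (k : ℤ) - 1) *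
      (∏ i ∈ Finset.range (k - 1), qint (α + 2 * ((i : ℤ) + 1) - 1)) / qfact k

lemma q_ne_zero : q ≠ 0 := RatFunc.X_ne_zero

lemma q_pow_ne_one {n : ℕ} (hn : n ≠ 0) : q ^ n ≠ 1 := by
  intro h
  have h2 : (Polynomial.X : Polynomial ℚ) ^ n = 1 := by
    apply IsFractionRing.injective (Polynomial ℚ) (RatFunc ℚ)
    rw [map_pow, map_one]
    rw [RatFunc.algebraMap_X]
    exact h
  have := congrArg Polynomial.natDegree h2
  simp [Polynomial.natDegree_X_pow] at this
  exact hn this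

lemma q_zpow_ne_one {n : ℤ} (hn : n ≠ 0) : q ^ n ≠ 1 := by
  rcases lt_or_gt_of_ne hn with h | h
  · intro h1
    have : q ^ (-n) = 1 := by
      rw [zpow_neg, h1, inv_one]
    rw [show (-n) = ((-n).toNat : ℤ) by omega, zpow_natCast] at this
    exact q_pow_ne_one (by omega) this
  · intro h1
    rw [show n = (n.toNat : ℤ) by omega, zpow_natCast] at h1
    exact q_pow_ne_one (by omega) h1

lemma q_sub_inv_ne_zero : q - q⁻¹ ≠ 0 := by
  intro h
  have h1 : q = q⁻¹ := sub_eq_zero.mp h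
  have h2 : q ^ (2:ℤ) = 1 := by
    have := congrArg (· * q) h1
    simp only [inv_mul_cancel₀ q_ne_zero] at this
    rw [show (2:ℤ) = 1 + 1 by norm_num, zpow_add₀ q_ne_zero, zpow_one]
    exact this
  exact q_zpow_ne_one (by norm_num) h2

lemma qint_zero : qint 0 = 0 := by simp [qint]

lemma qint_one : qint 1 = 1 := by
  simp only [qint, zpow_one, zpow_neg, zpow_one]
  exact div_self q_sub_inv_ne_zero

lemma qint_ne_zero {a : ℤ} (ha : a ≠ 0) : qint a ≠ 0 := by
  apply div_ne_zero _ q_sub_inv_ne_zero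
  intro h
  have h1 : q ^ a = q ^ (-a) := sub_eq_zero.mp h
  have h2 : q ^ (2*a) = 1 := by
    have := congrArg (· * q ^ a) h1
    simp only [← zpow_add₀ q_ne_zero] at this
    symm
    simpa [show -a + a = 0 by ring, show a + a = 2*a by ring] using this.symm
  exact q_zpow_ne_one (by omega) h2

lemma qfact_ne_zero (k : ℕ) : qfact k ≠ 0 := by
  rw [qfact, Finset.prod_ne_zero_iff]
  intro i _
  exact qint_ne_zero (by omega)

lemma qfact_succ (k : ℕ) : qfact (k+1) = qfact k * qint ((k:ℤ) + 1) := by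
  rw [qfact, Finset.prod_range_succ, qfact]

lemma key_helper (A B C : RatFunc ℚ) (hA : A ≠ 0) (hB : B ≠ 0) (hC : C ≠ 0) :
    (A - A⁻¹)*(B - B⁻¹)
      = (C - C⁻¹)*(A*B*C⁻¹ - (A*B*C⁻¹)⁻¹) + (A*C⁻¹ - (A*C⁻¹)⁻¹)*(B*C⁻¹ - (B*C⁻¹)⁻¹) := by
  field_simp
  ring

lemma qint_key (a b c : ℤ) :
    qint a * qint b = qint c * qint (a + b - c) + qint (a - c) * qint (b - c) := by
  have hA : q ^ a ≠ 0 := zpow_ne_zero _ q_ne_zero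
  have hB : q ^ b ≠ 0 := zpow_ne_zero _ q_ne_zero
  have hC : q ^ c ≠ 0 := zpow_ne_zero _ q_ne_zero
  simp only [qint, div_mul_div_comm, ← add_div]
  congr 1
  have h1 : q ^ (a + b - c) = q ^ a * q ^ b * (q ^ c)⁻¹ := by
    rw [zpow_sub₀ q_ne_zero, zpow_add₀ q_ne_zero, div_eq_mul_inv]
  have h2 : q ^ (a - c) = q ^ a * (q ^ c)⁻¹ := by
    rw [zpow_sub₀ q_ne_zero, div_eq_mul_inv]
  have h3 : q ^ (b - c) = q ^ b * (q ^ c)⁻¹ := by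
    rw [zpow_sub₀ q_ne_zero, div_eq_mul_inv]
  simp only [zpow_neg, h1, h2, h3]
  exact key_helper _ _ _ hA hB hC

lemma fcoef_odd_eq (α : ℤ) (j : ℕ) (h : (α - (j:ℤ)) % 2 ≠ 0) :
    fcoef α j = (∏ i ∈ Finset.range j, qint (α - (j:ℤ) + 1 + 2*(i:ℤ))) / qfact j := by
  match j with
  | 0 => simp [fcoef, qfact]
  | j+1 => rw [fcoef, if_neg (by omega : ¬ (j+1 = 0)), if_neg h]

lemma fcoef_even_eq (α : ℤ) (j : ℕ) (hj : j ≠ 0) (h : (α - (j:ℤ)) % 2 = 0) :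
    fcoef α j = qint α * (∏ i ∈ Finset.range (j-1), qint (α - (j:ℤ) + 2*((i:ℤ)+1))) / qfact j := by
  rw [fcoef, if_neg hj, if_pos h]

lemma gcoef_even_eq (β : ℤ) (k : ℕ) (h : β % 2 = 0) :
    gcoef β k = (-1:RatFunc ℚ)^k * (∏ i ∈ Finset.range k, qint (β + 2*(i:ℤ))) / qfact k := by
  match k with
  | 0 => simp [gcoef, qfact]
  | k+1 => rw [gcoef, if_neg (by omega : ¬ (k+1 = 0)), if_pos h]

lemma gcoef_odd_eq (β : ℤ) (k : ℕ) (hk : k ≠ 0) (h : ¬ (β % 2 = 0)) :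
    gcoef β k = (-1:RatFunc ℚ)^k * qint (β + (k:ℤ) - 1) *
      (∏ i ∈ Finset.range (k-1), qint (β + 2*((i:ℤ)+1) - 1)) / qfact k := by
  rw [gcoef, if_neg hk, if_neg h]

lemma f_step_odd (α : ℤ) (j : ℕ) (h : (α - (j:ℤ)) % 2 ≠ 0) :
    qint ((j:ℤ)+1) * fcoef α (j+1) = qint α * fcoef α j := by
  have hq1 : qint ((j:ℤ)+1) ≠ 0 := qint_ne_zero (by omega)
  rw [fcoef_even_eq α (j+1) (by omega) (by push_cast; omega), fcoef_odd_eq α j h,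
    Nat.add_sub_cancel, qfact_succ]
  have hP : (∏ i ∈ Finset.range j, qint (α - ((j+1:ℕ):ℤ) + 2*((i:ℤ)+1)))
      = ∏ i ∈ Finset.range j, qint (α - (j:ℤ) + 1 + 2*(i:ℤ)) := by
    refine Finset.prod_congr rfl (fun i _ => ?_)
    congr 1
    push_cast
    ring
  rw [hP, ← mul_div_assoc, ← mul_div_assoc,
    div_eq_div_iff (mul_ne_zero (qfact_ne_zero j) hq1) (qfact_ne_zero j)]
  ring

lemma gcoef_zero (β : ℤ) : gcoef β 0 = 1 := by simp [gcoef]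

lemma fcoef_zero (α : ℤ) : fcoef α 0 = 1 := by simp [fcoef]

lemma qfact_zero : qfact 0 = 1 := by simp [qfact]

lemma qfact_one : qfact 1 = 1 := by
  rw [show (1:ℕ) = 0 + 1 from rfl, qfact_succ, qfact_zero]
  norm_num [qint_one]

lemma f_step_even (α : ℤ) (j : ℕ) (h : (α - (j:ℤ)) % 2 = 0) :
    qint α * qint ((j:ℤ)+1) * fcoef α (j+1) = qint (α - (j:ℤ)) * qint (α + (j:ℤ)) * fcoef α j := by
  match j with
  | 0 =>
    rw [fcoef_odd_eq α 1 (by push_cast; omega)]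
    simp [qfact_one, qint_one, fcoef]
  | (j'+1) =>
    set j := j' + 1 with hj
    have hf0 := fcoef_even_eq α j (by omega) h
    have hf1 := fcoef_odd_eq α (j+1) (by push_cast; omega)
    have hsplit : (∏ i ∈ Finset.range (j+1), qint (α - ((j+1:ℕ):ℤ) + 1 + 2*(i:ℤ)))
        = qint (α - (j:ℤ)) * (∏ i ∈ Finset.range (j-1), qint (α - (j:ℤ) + 2*((i:ℤ)+1)))
          * qint (α + (j:ℤ)) := by
      rw [Finset.prod_range_succ', hj, Finset.prod_range_succ]
      have e1 : ∀ i : ℕ, qint (α - ((j'+1+1:ℕ):ℤ) + 1 + 2*((i+1:ℕ):ℤ))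
          = qint (α - ((j'+1:ℕ):ℤ) + 2*((i:ℤ)+1)) := by
        intro i; congr 1; push_cast; ring
      have e2 : qint (α - ((j'+1+1:ℕ):ℤ) + 1 + 2*((0:ℕ):ℤ)) = qint (α - ((j'+1:ℕ):ℤ)) := by
        congr 1; push_cast; ring
      have e3 : qint (α - ((j'+1+1:ℕ):ℤ) + 1 + 2*((j'+1:ℕ):ℤ)) = qint (α + ((j'+1:ℕ):ℤ)) := by
        congr 1; push_cast; ring
      simp only [Nat.add_sub_cancel]
      rw [Finset.prod_congr rfl (fun i _ => e1 i), e2, e3]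
      ring
    rw [hf1, hf0, qfact_succ, hsplit]
    rw [← mul_div_assoc, ← mul_div_assoc,
      div_eq_div_iff (mul_ne_zero (qfact_ne_zero j) (qint_ne_zero (by omega))) (qfact_ne_zero j)]
    ring

lemma g_step_odd (β : ℤ) (k : ℕ) (hk : k ≠ 0) (h : ¬ β % 2 = 0) :
    qint (k:ℤ) * gcoef β k = -(qint (β + (k:ℤ) - 1) * gcoef (β+1) (k-1)) := by
  match k with
  | 1 =>
    rw [gcoef_odd_eq β 1 (by omega) h]
    simp [qfact_one, qint_one, gcoef_zero]
  | (k'+2) =>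
    set k := k' + 2 with hk2
    have hg1 := gcoef_odd_eq β k (by omega) h
    have hg0 := gcoef_even_eq (β+1) (k-1) (by omega)
    have hP : (∏ i ∈ Finset.range (k-1), qint (β + 2*((i:ℤ)+1) - 1))
        = ∏ i ∈ Finset.range (k-1), qint (β + 1 + 2*(i:ℤ)) := by
      refine Finset.prod_congr rfl (fun i _ => ?_)
      congr 1; ring
    have hq : qfact k = qfact (k-1) * qint (k:ℤ) := by
      rw [hk2, show k'+2-1 = k'+1 from rfl, qfact_succ]
      have e : ((k'+1:ℕ):ℤ) + 1 = ((k'+2:ℕ):ℤ) := by push_cast; ring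
      rw [e]
    rw [hg1, hg0, hP, hq]
    rw [← mul_div_assoc, mul_div_assoc', ← neg_div,
      div_eq_div_iff (mul_ne_zero (qfact_ne_zero _) (qint_ne_zero (by push_cast; omega))) (qfact_ne_zero _)]
    have hpow : ((-1 : RatFunc ℚ))^k = ((-1:RatFunc ℚ))^(k-1) * (-1) := by
      rw [hk2, show k'+2-1 = k'+1 from rfl, pow_succ]
    rw [hpow]
    ring

lemma g_step_even (β : ℤ) (k : ℕ) (hk : k ≠ 0) (h : β % 2 = 0) :
    qint β * qint (β + 2*(k:ℤ) - 2) * gcoef (β+1) (k-1)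
      = -(qint (k:ℤ) * qint (β + (k:ℤ) - 1) * gcoef β k) := by
  match k with
  | 1 =>
    rw [gcoef_even_eq β 1 h]
    simp only [show (1:ℕ)-1 = 0 from rfl, gcoef_zero, qfact_one, Finset.prod_range_one,
      Nat.cast_one, Nat.cast_zero, qint_one]
    rw [show β + 2*(1:ℤ) - 2 = β by ring, show β + 2*(0:ℤ) = β by ring,
      show β + (1:ℤ) - 1 = β by ring]
    ring
  | (k'+2) =>
    set k := k' + 2 with hk2
    have hg0 := gcoef_even_eq β k h
    have hg1 := gcoef_odd_eq (β+1) (k-1) (by omega) (by omega)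
    have hsplit : (∏ i ∈ Finset.range k, qint (β + 2*(i:ℤ)))
        = qint β * (∏ i ∈ Finset.range k', qint (β + 2*((i+1:ℕ):ℤ))) * qint (β + 2*(k:ℤ) - 2) := by
      rw [hk2, Finset.prod_range_succ, Finset.prod_range_succ']
      rw [show β + 2*((0:ℕ):ℤ) = β by push_cast; ring,
        show β + 2*((k'+1:ℕ):ℤ) = β + 2*((k'+2:ℕ):ℤ) - 2 by push_cast; ring]
      ring
    have hP : (∏ i ∈ Finset.range (k-1-1), qint (β + 1 + 2*((i:ℤ)+1) - 1))
        = ∏ i ∈ Finset.range k', qint (β + 2*((i+1:ℕ):ℤ)) := by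
      rw [show k-1-1 = k' from rfl]
      refine Finset.prod_congr rfl (fun i _ => ?_)
      congr 1
      push_cast
      ring
    have hq : qfact k = qfact (k-1) * qint (k:ℤ) := by
      rw [hk2, show k'+2-1 = k'+1 from rfl, qfact_succ]
      have e : ((k'+1:ℕ):ℤ) + 1 = ((k'+2:ℕ):ℤ) := by push_cast; ring
      rw [e]
    have e2 : β + 1 + ((k-1:ℕ):ℤ) - 1 = β + (k:ℤ) - 1 := by
      rw [hk2]
      push_cast
      ring
    rw [hg0, hg1, hsplit, hP, e2, hq]
    have hpow : ((-1 : RatFunc ℚ))^k = ((-1:RatFunc ℚ))^(k-1) * (-1) := by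
      rw [hk2, show k'+2-1 = k'+1 from rfl, pow_succ]
    rw [← mul_div_assoc, mul_div_assoc', ← neg_div,
      div_eq_div_iff (qfact_ne_zero _) (mul_ne_zero (qfact_ne_zero _) (qint_ne_zero (by push_cast; omega))), hpow]
    ring

lemma stepB (α : ℤ) (l m : ℕ) (hm : m < l) (h : (α - (m:ℤ)) % 2 ≠ 0) :
    qint ((m:ℤ)+1) * qint (α + (l:ℤ) - 1) * (fcoef α (m+1) * gcoef (α + ((m+1:ℕ):ℤ)) (l-(m+1)))
      = -(qint α * qint ((l:ℤ)-(m:ℤ)) * (fcoef α m * gcoef (α + (m:ℤ)) (l-m))) := by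
  have h1 := f_step_odd α m h
  have h3 := g_step_odd (α + (m:ℤ)) (l-m) (by omega) (by omega)
  have c1 : ((l-m:ℕ):ℤ) = (l:ℤ)-(m:ℤ) := by omega
  rw [c1] at h3
  rw [show α+(m:ℤ)+((l:ℤ)-(m:ℤ))-1 = α+(l:ℤ)-1 by ring] at h3
  rw [show α+(m:ℤ)+1 = α+((m+1:ℕ):ℤ) by push_cast; ring] at h3
  rw [show l-m-1 = l-(m+1) by omega] at h3
  linear_combination (qint (α+(l:ℤ)-1) * gcoef (α+((m+1:ℕ):ℤ)) (l-(m+1))) * h1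
    + (qint α * fcoef α m) * h3

lemma stepA (α : ℤ) (l m : ℕ) (hm : m < l) (h : (α - (m:ℤ)) % 2 = 0) :
    qint α * qint ((m:ℤ)+1) * qint (α + 2*(l:ℤ) - (m:ℤ) - 2)
        * (fcoef α (m+1) * gcoef (α + ((m+1:ℕ):ℤ)) (l-(m+1)))
      = -(qint (α - (m:ℤ)) * qint ((l:ℤ)-(m:ℤ)) * qint (α + (l:ℤ) - 1)
        * (fcoef α m * gcoef (α + (m:ℤ)) (l-m))) := by
  have h2 := f_step_even α m h
  have h4 := g_step_even (α + (m:ℤ)) (l-m) (by omega) (by omega)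
  have c1 : ((l-m:ℕ):ℤ) = (l:ℤ)-(m:ℤ) := by omega
  rw [c1] at h4
  rw [show α+(m:ℤ)+2*((l:ℤ)-(m:ℤ))-2 = α+2*(l:ℤ)-(m:ℤ)-2 by ring] at h4
  rw [show α+(m:ℤ)+((l:ℤ)-(m:ℤ))-1 = α+(l:ℤ)-1 by ring] at h4
  rw [show α+(m:ℤ)+1 = α+((m+1:ℕ):ℤ) by push_cast; ring] at h4
  rw [show l-m-1 = l-(m+1) by omega] at h4
  linear_combination (qint (α+2*(l:ℤ)-(m:ℤ)-2) * gcoef (α+((m+1:ℕ):ℤ)) (l-(m+1))) * h2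
    + (qint (α-(m:ℤ)) * fcoef α m) * h4

lemma invariant (α : ℤ) (l : ℕ) :
    ∀ m : ℕ, m < l →
    qint (l:ℤ) * qint α * qint (α + (l:ℤ) - 1)
        * (∑ j ∈ Finset.range (m+1), fcoef α j * gcoef (α + (j:ℤ)) (l-j))
      = -(qint ((m:ℤ)+1)
          * (if (α - (m:ℤ)) % 2 = 0 then qint (α + 2*(l:ℤ) - (m:ℤ) - 2) * qint α
             else qint (α + (l:ℤ) - 1 - (m:ℤ)) * qint (α + (l:ℤ) - 1))
          * (fcoef α (m+1) * gcoef (α + ((m+1:ℕ):ℤ)) (l-(m+1)))) := by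
  intro m
  induction m with
  | zero =>
    intro hm
    rw [Finset.sum_range_one]
    split_ifs with hpar
    · have hA := stepA α l 0 hm hpar
      simp only [Nat.cast_zero, sub_zero, Nat.sub_zero, Nat.cast_one, zero_add] at hA ⊢
      linear_combination hA
    · have hB := stepB α l 0 hm hpar
      simp only [Nat.cast_zero, sub_zero, Nat.sub_zero, Nat.cast_one, zero_add] at hB ⊢
      linear_combination qint (α+(l:ℤ)-1) * hB
  | succ n ih =>
    intro hm
    have ihn := ih (by omega)
    rw [Finset.sum_range_succ]
    split_ifs with hpar
    · -- case A at m = n+1 ; previous step had odd parity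
      rw [if_neg (by push_cast at hpar ⊢; omega)] at ihn
      have hA := stepA α l (n+1) hm hpar
      have key : qint (l:ℤ) * qint α
          = qint ((n:ℤ)+1) * qint (α + (l:ℤ) - 1 - (n:ℤ))
            + qint ((l:ℤ)-((n+1:ℕ):ℤ)) * qint (α-((n+1:ℕ):ℤ)) := by
        have hk := qint_key (l:ℤ) α ((n:ℤ)+1)
        rw [show (l:ℤ)+α-((n:ℤ)+1) = α+(l:ℤ)-1-(n:ℤ) by ring,
          show (l:ℤ)-((n:ℤ)+1) = (l:ℤ)-((n+1:ℕ):ℤ) by push_cast; ring,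
          show α-((n:ℤ)+1) = α-((n+1:ℕ):ℤ) by push_cast; ring] at hk
        exact hk
      linear_combination ihn + hA
        + (qint (α+(l:ℤ)-1) * (fcoef α (n+1) * gcoef (α+((n+1:ℕ):ℤ)) (l-(n+1)))) * key
    · -- case B at m = n+1 ; previous step had even parity
      rw [if_pos (by push_cast at hpar ⊢; omega)] at ihn
      have hB := stepB α l (n+1) hm hpar
      have key : qint (l:ℤ) * qint (α + (l:ℤ) - 1)
          = qint ((n:ℤ)+1) * qint (α + 2*(l:ℤ) - (n:ℤ) - 2)
            + qint ((l:ℤ)-((n+1:ℕ):ℤ)) * qint (α+(l:ℤ)-1-((n+1:ℕ):ℤ)) := by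
        have hk := qint_key (l:ℤ) (α + (l:ℤ) - 1) ((n:ℤ)+1)
        rw [show (l:ℤ)+(α+(l:ℤ)-1)-((n:ℤ)+1) = α+2*(l:ℤ)-(n:ℤ)-2 by ring,
          show (l:ℤ)-((n:ℤ)+1) = (l:ℤ)-((n+1:ℕ):ℤ) by push_cast; ring,
          show α+(l:ℤ)-1-((n:ℤ)+1) = α+(l:ℤ)-1-((n+1:ℕ):ℤ) by push_cast; ring] at hk
        exact hk
      linear_combination ihn + qint (α+(l:ℤ)-1-((n+1:ℕ):ℤ)) * hB
        + (qint α * (fcoef α (n+1) * gcoef (α+((n+1:ℕ):ℤ)) (l-(n+1)))) * key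

lemma fcoef_vanish (α : ℤ) (j : ℕ) (hj : j ≠ 0) (hlow : -(j:ℤ)+1 ≤ α) (hupp : α ≤ (j:ℤ)-1) :
    fcoef α j = 0 := by
  by_cases hp : (α - (j:ℤ)) % 2 = 0
  · rw [fcoef_even_eq α j hj hp]
    by_cases h0 : α = 0
    · rw [h0, qint_zero]
      simp
    · obtain ⟨i, hi1, hi2⟩ : ∃ i : ℕ, i < j-1 ∧ α-(j:ℤ)+2*((i:ℤ)+1) = 0 := by
        refine ⟨((j:ℤ)-α-2).toNat/2, ?_, ?_⟩ <;> omega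
      rw [Finset.prod_eq_zero (Finset.mem_range.mpr hi1) (by rw [hi2, qint_zero])]
      simp
  · rw [fcoef_odd_eq α j hp]
    obtain ⟨i, hi1, hi2⟩ : ∃ i : ℕ, i < j ∧ α-(j:ℤ)+1+2*(i:ℤ) = 0 := by
      refine ⟨((j:ℤ)-1-α).toNat/2, ?_, ?_⟩ <;> omega
    rw [Finset.prod_eq_zero (Finset.mem_range.mpr hi1) (by rw [hi2, qint_zero])]
    simp

lemma gcoef_vanish (β : ℤ) (k : ℕ) (hk : k ≠ 0) (hlow : 1-(k:ℤ) ≤ β) (hupp : β ≤ 0) :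
    gcoef β k = 0 := by
  by_cases hp : β % 2 = 0
  · rw [gcoef_even_eq β k hp]
    obtain ⟨i, hi1, hi2⟩ : ∃ i : ℕ, i < k ∧ β + 2*(i:ℤ) = 0 := by
      refine ⟨(-β).toNat/2, ?_, ?_⟩ <;> omega
    rw [Finset.prod_eq_zero (Finset.mem_range.mpr hi1) (by rw [hi2, qint_zero])]
    simp
  · rw [gcoef_odd_eq β k hk hp]
    by_cases h1 : β + (k:ℤ) - 1 = 0
    · rw [h1, qint_zero]
      simp
    · obtain ⟨i, hi1, hi2⟩ : ∃ i : ℕ, i < k-1 ∧ β + 2*((i:ℤ)+1) - 1 = 0 := by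
        refine ⟨(-β-1).toNat/2, ?_, ?_⟩ <;> omega
      rw [Finset.prod_eq_zero (Finset.mem_range.mpr hi1) (by rw [hi2, qint_zero])]
      simp


/-- The two triangular transition matrices of Proposition 4.15 are mutually inverse:
for every `α ∈ ℤ` and `l ≥ 1`, `Σ_{j=0}^{l} f_j(α)·g_{l−j}(α+j) = 0`. -/
theorem fcoef_gcoef_inverse (α : ℤ) (l : ℕ) (hl : 1 ≤ l) :
    ∑ j ∈ Finset.range (l + 1), fcoef α j * gcoef (α + (j : ℤ)) (l - j) = 0 := by
  by_cases h0 : α = 0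
  · subst h0
    apply Finset.sum_eq_zero
    intro j hj
    rcases Nat.eq_zero_or_pos j with hj0 | hj1
    · subst hj0
      rw [show (0:ℤ) + ((0:ℕ):ℤ) = 0 by norm_num, Nat.sub_zero,
        gcoef_vanish 0 l (by omega) (by omega) (by omega)]
      ring
    · rw [fcoef_vanish 0 j (by omega) (by omega) (by omega)]
      ring
  by_cases h1 : α = 1 - (l:ℤ)
  · apply Finset.sum_eq_zero
    intro j hj
    rw [Finset.mem_range] at hj
    rcases Nat.lt_or_ge j l with hjl | hjl
    · rw [gcoef_vanish (α + (j:ℤ)) (l-j) (by omega) (by omega) (by omega)]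
      ring
    · have hjeq : j = l := by omega
      subst hjeq
      rw [fcoef_vanish α j (by omega) (by omega) (by omega)]
      ring
  -- generic case
  have hql : qint (l:ℤ) ≠ 0 := qint_ne_zero (by omega)
  have hqa : qint α ≠ 0 := qint_ne_zero h0
  have hqz : qint (α + (l:ℤ) - 1) ≠ 0 := qint_ne_zero (by omega)
  have R := invariant α l (l-1) (by omega)
  rw [show l-1+1 = l by omega] at R
  have c2 : ((l-1:ℕ):ℤ) + 1 = (l:ℤ) := by omega
  rw [c2] at R
  rw [Nat.sub_self, gcoef_zero] at R
  split_ifs at R with hpar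
  · rw [show α + 2*(l:ℤ) - ((l-1:ℕ):ℤ) - 2 = α + (l:ℤ) - 1 by omega] at R
    rw [Finset.sum_range_succ, Nat.sub_self, gcoef_zero]
    have hX : qint (l:ℤ) * qint α * qint (α + (l:ℤ) - 1)
        * ((∑ j ∈ Finset.range l, fcoef α j * gcoef (α + (j:ℤ)) (l-j)) + fcoef α l * 1) = 0 := by
      rw [mul_add, R]
      ring
    rcases mul_eq_zero.mp hX with h | h
    · exact absurd h (by
        intro hc
        rcases mul_eq_zero.mp hc with h' | h'
        · rcases mul_eq_zero.mp h' with h'' | h''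
          · exact hql h''
          · exact hqa h''
        · exact hqz h')
    · exact h
  · rw [show α + (l:ℤ) - 1 - ((l-1:ℕ):ℤ) = α by omega] at R
    rw [Finset.sum_range_succ, Nat.sub_self, gcoef_zero]
    have hX : qint (l:ℤ) * qint α * qint (α + (l:ℤ) - 1)
        * ((∑ j ∈ Finset.range l, fcoef α j * gcoef (α + (j:ℤ)) (l-j)) + fcoef α l * 1) = 0 := by
      rw [mul_add, R]
      ring
    rcases mul_eq_zero.mp hX with h | h
    · exact absurd h (by
        intro hc
        rcases mul_eq_zero.mp hc with h' | h'
        · rcases mul_eq_zero.mp h' with h'' | h''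
          · exact hql h''
          · exact hqa h''
        · exact hqz h')
    · exact h
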